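/- Let K ⊆ L be a field extension, σ a type, and S a subset of the affine space σ → K. Let ι : (σ → K) → (σ → L) be the coordinatewise inclusion. Then the vanishing ideal of ι(S) in the polynomial ring L[X_s : s ∈ σ] equals the extension, along the coefficient map K[X_s] → L[X_s], of the vanishing ideal of S in K[X_s : s ∈ σ]; that is, every polynomial with coefficients in L vanishing identically on S is an L-linear combination of polynomials with coefficients in K vanishing identically on S. -/

import Mathlib

open MvPolynomial
open scoped Classical

/-- Coordinate extraction: given a `K`-basis `b` of `L` and an index `i`, send a polynomial
over `L` to the polynomial over `K` whose coefficients are the `i`-th `b`-coordinates. -/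
private noncomputable def vanishAuxPhi {K L : Type*} [Field K] [Field L] [Algebra K L]
    {σ ι : Type*} (b : Module.Basis ι K L) (i : ι) (p : MvPolynomial σ L) : MvPolynomial σ K :=
  ∑ m ∈ p.support, monomial m (b.repr (p.coeff m) i)

private lemma vanishAuxPhi_coeff {K L : Type*} [Field K] [Field L] [Algebra K L]
    {σ ι : Type*} (b : Module.Basis ι K L) (i : ι) (p : MvPolynomial σ L) (n : σ →₀ ℕ) :
    (vanishAuxPhi b i p).coeff n = b.repr (p.coeff n) i := by
  rw [vanishAuxPhi, MvPolynomial.coeff_sum]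
  rw [Finset.sum_eq_single n (fun m _ hmn => by rw [coeff_monomial, if_neg hmn])
    (fun hn => by rw [MvPolynomial.notMem_support_iff.mp hn, map_zero,
      Finsupp.coe_zero, Pi.zero_apply, coeff_monomial, if_pos rfl])]
  rw [coeff_monomial, if_pos rfl]

private lemma vanishAuxPhi_eval {K L : Type*} [Field K] [Field L] [Algebra K L]
    {σ ι : Type*} (b : Module.Basis ι K L) (i : ι) (p : MvPolynomial σ L) (x : σ → K) :
    MvPolynomial.eval x (vanishAuxPhi b i p) =
      b.repr (MvPolynomial.eval (fun s => algebraMap K L (x s)) p) i := by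
  rw [vanishAuxPhi, map_sum, MvPolynomial.eval_eq, map_sum, Finsupp.finset_sum_apply]
  refine Finset.sum_congr rfl fun m _ => ?_
  rw [MvPolynomial.eval_monomial]
  have h : MvPolynomial.coeff m p * ∏ s ∈ m.support, (algebraMap K L (x s)) ^ m s
      = (∏ s ∈ m.support, x s ^ m s) • MvPolynomial.coeff m p := by
    rw [Algebra.smul_def, mul_comm, map_prod]
    simp [map_pow]
  rw [h, map_smul, Finsupp.smul_apply, smul_eq_mul, mul_comm, Finsupp.prod]

/-- **Field-of-definition property of vanishing ideals.**
Let `K ⊆ L` be a field extension, `σ` a type, and `S ⊆ (σ → K)` a set of points of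
affine space. Let `ι : (σ → K) → (σ → L)` be the coordinatewise inclusion. Then the
vanishing ideal of `ι(S)` in `L[Xₛ]` equals the extension, along the coefficient map
`K[Xₛ] → L[Xₛ]`, of the vanishing ideal of `S` in `K[Xₛ]`: every polynomial with
coefficients in `L` vanishing on `S` is an `L`-linear combination of polynomials
with coefficients in `K` vanishing on `S`. -/
theorem vanishingIdeal_image_eq_map (K L : Type*) [Field K] [Field L] [Algebra K L]
    (σ : Type*) (S : Set (σ → K)) :
    MvPolynomial.vanishingIdeal L
        ((fun x : σ → K => fun s : σ => algebraMap K L (x s)) '' S) =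
      Ideal.map (MvPolynomial.map (algebraMap K L))
        (MvPolynomial.vanishingIdeal K S) := by
  apply le_antisymm
  · intro p hp
    set b := Module.Basis.ofVectorSpace K L with hb
    rw [MvPolynomial.mem_vanishingIdeal_iff] at hp
    -- decomposition of p
    have hdec : p = ∑ i ∈ p.support.biUnion (fun m => (b.repr (p.coeff m)).support),
        MvPolynomial.C (b i) * MvPolynomial.map (algebraMap K L) (vanishAuxPhi b i p) := by
      ext n
      rw [MvPolynomial.coeff_sum]
      simp only [MvPolynomial.coeff_C_mul, MvPolynomial.coeff_map, vanishAuxPhi_coeff]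
      have h1 : ∀ i, b i * algebraMap K L (b.repr (p.coeff n) i)
          = (b.repr (p.coeff n)) i • b i := fun i => by rw [Algebra.smul_def, mul_comm]
      rw [Finset.sum_congr rfl fun i _ => h1 i]
      have hsub : (b.repr (p.coeff n)).support ⊆
          p.support.biUnion (fun m => (b.repr (p.coeff m)).support) := by
        by_cases hn : n ∈ p.support
        · exact Finset.subset_biUnion_of_mem (fun m => (b.repr (p.coeff m)).support) hn
        · rw [MvPolynomial.notMem_support_iff.mp hn, map_zero, Finsupp.support_zero]
          exact Finset.empty_subset _
      rw [← Finset.sum_subset hsub (fun i _ hi => by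
        rw [Finsupp.notMem_support_iff.mp hi, zero_smul])]
      have := b.linearCombination_repr (p.coeff n)
      rwa [Finsupp.linearCombination_apply, Finsupp.sum, eq_comm] at this
    rw [hdec]
    refine Ideal.sum_mem _ fun i _ => Ideal.mul_mem_left _ _ (Ideal.mem_map_of_mem _ ?_)
    rw [MvPolynomial.mem_vanishingIdeal_iff]
    intro x hx
    show MvPolynomial.eval x _ = 0
    rw [vanishAuxPhi_eval]
    rw [(show MvPolynomial.eval (fun s => algebraMap K L (x s)) p = 0 from hp _ ⟨x, hx, rfl⟩), map_zero]
    rfl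
  · rw [Ideal.map_le_iff_le_comap]
    intro q hq
    rw [Ideal.mem_comap, MvPolynomial.mem_vanishingIdeal_iff]
    rintro y ⟨x, hx, rfl⟩
    rw [MvPolynomial.mem_vanishingIdeal_iff] at hq
    have h2 : (MvPolynomial.eval fun s : σ => algebraMap K L (x s))
        (MvPolynomial.map (algebraMap K L) q) = algebraMap K L (MvPolynomial.eval x q) := by
      rw [MvPolynomial.eval_map]
      have h3 : MvPolynomial.eval x q = MvPolynomial.eval₂ (RingHom.id K) x q := rfl
      rw [h3, MvPolynomial.eval₂_comp_left (algebraMap K L) (RingHom.id K) x q, RingHom.comp_id]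
      rfl
    show (MvPolynomial.eval fun s : σ => algebraMap K L (x s))
        (MvPolynomial.map (algebraMap K L) q) = 0
    rw [h2, (show MvPolynomial.eval x q = 0 from hq x hx), map_zero]
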